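/- If a ring O admits a constrained filtration, then the polynomial ring O[X] admits a constrained filtration. -/

import Mathlib

/-- A constrained filtration of a ring `O`: an increasing chain `(Oₙ)` of finite
nonempty subsets such that (CF0) `⋃ₙ Oₙ = O`; (CF1) there is `k` with
`Oₙ + Oₙ ⊆ O_{n+k}` for all `n`; (CF2) for every `a ∈ O` there is `k` with
`a·Oₙ ⊆ O_{n+k}` for all `n`; (CF3) for every `ε > 0` there is `C_ε > 0` with
`|O_{n+1}| ≤ C_ε·|Oₙ|^(1+ε)` for all `n`. -/
def IsConstrainedFiltration (O : Type*) [Ring O] (F : ℕ → Set O) : Prop :=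
  (∀ n, (F n).Finite ∧ (F n).Nonempty) ∧
  (∀ n, F n ⊆ F (n + 1)) ∧
  (∀ x : O, ∃ n, x ∈ F n) ∧
  (∃ k : ℕ, ∀ n, ∀ x ∈ F n, ∀ y ∈ F n, x + y ∈ F (n + k)) ∧
  (∀ a : O, ∃ k : ℕ, ∀ n, ∀ x ∈ F n, a * x ∈ F (n + k)) ∧
  (∀ ε : ℝ, 0 < ε → ∃ C : ℝ, 0 < C ∧
    ∀ n, ((F (n + 1)).ncard : ℝ) ≤ C * ((F n).ncard : ℝ) ^ ((1 : ℝ) + ε))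

/-- A ring is constrainedly filtered if it admits a constrained filtration. -/
def ConstrainedlyFiltered (O : Type*) [Ring O] : Prop :=
  ∃ F : ℕ → Set O, IsConstrainedFiltration O F

open Polynomial

section Aux

lemma one_le_prod_real {s : Finset ℕ} {f : ℕ → ℝ} (h : ∀ i ∈ s, 1 ≤ f i) :
    1 ≤ ∏ i ∈ s, f i := by
  calc (1:ℝ) = ∏ _i ∈ s, (1:ℝ) := by simp
  _ ≤ _ := Finset.prod_le_prod (by intros; norm_num) h

lemma prod_le_prod_subset_real {s t : Finset ℕ} {f : ℕ → ℝ} (hst : s ⊆ t)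
    (h : ∀ i ∈ t, 1 ≤ f i) : ∏ i ∈ s, f i ≤ ∏ i ∈ t, f i := by
  rw [← Finset.prod_sdiff hst]
  exact le_mul_of_one_le_left
    (Finset.prod_nonneg fun i hi => le_trans zero_le_one (h i (hst hi)))
    (one_le_prod_real fun i hi => h i (Finset.mem_sdiff.mp hi).1)

lemma ncard_sprod {α β : Type*} (s : Set α) (t : Set β) :
    (s ×ˢ t).ncard = s.ncard * t.ncard := by
  rw [← Nat.card_coe_set_eq, ← Nat.card_coe_set_eq, ← Nat.card_coe_set_eq,
    Nat.card_congr (Equiv.Set.prod s t), Nat.card_prod]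

lemma rpow_finset_sum (x : ℝ) (hx : 0 < x) (s : Finset ℕ) (f : ℕ → ℝ) :
    x ^ (∑ j ∈ s, f j) = ∏ j ∈ s, x ^ (f j) := by
  classical
  induction s using Finset.induction with
  | empty => simp
  | @insert a s hj ih => rw [Finset.sum_insert hj, Finset.prod_insert hj,
      Real.rpow_add hx, ih]


lemma growth_aux (ε : ℝ) (hε : 0 < ε) (a : ℕ → ℝ) (ha : ∀ n, 1 ≤ a n)
    (C0 : ℝ) (hC0 : 1 ≤ C0) (hstep : ∀ n, a (n + 1) ≤ C0 * a n ^ ((1 : ℝ) + ε / 2)) :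
    ∃ C : ℝ, 0 < C ∧ ∀ n, a n ≤ C * (∏ m ∈ Finset.range n, a m) ^ ε := by
  have hC0pos : (0 : ℝ) < C0 := lt_of_lt_of_le one_pos hC0
  have hapos : ∀ n, (0 : ℝ) < a n := fun n => lt_of_lt_of_le one_pos (ha n)
  set δ : ℝ := ε / 2 with hδ
  have hδpos : 0 < δ := by positivity
  have h1δ : (0:ℝ) < 1 + δ := by linarith
  set t : ℝ := 1 / (1 + δ) with ht
  have htpos : 0 < t := by positivity
  have ht1 : t < 1 := by
    rw [ht, div_lt_one h1δ]; linarith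
  have htle : t ≤ 1 := le_of_lt ht1
  have hmul : (1 + δ) * t = 1 := by
    rw [ht]; field_simp
  -- single step: a (n+1) ^ t ≤ C0 * a n
  have step : ∀ n, a (n + 1) ^ t ≤ C0 * a n := by
    intro n
    have h1 : a (n + 1) ^ t ≤ (C0 * a n ^ ((1:ℝ) + δ)) ^ t :=
      Real.rpow_le_rpow (le_of_lt (hapos _)) (hstep n) (le_of_lt htpos)
    have h2 : (C0 * a n ^ ((1:ℝ) + δ)) ^ t = C0 ^ t * a n := by
      rw [Real.mul_rpow (le_of_lt hC0pos) (Real.rpow_nonneg (le_of_lt (hapos n)) _),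
        ← Real.rpow_mul (le_of_lt (hapos n)), hmul, Real.rpow_one]
    have h3 : C0 ^ t ≤ C0 := by
      calc C0 ^ t ≤ C0 ^ (1:ℝ) := Real.rpow_le_rpow_of_exponent_le hC0 htle
      _ = C0 := Real.rpow_one C0
    calc a (n+1) ^ t ≤ C0 ^ t * a n := by rw [← h2]; exact h1
    _ ≤ C0 * a n := mul_le_mul_of_nonneg_right h3 (le_of_lt (hapos n))
  -- chain: a (n + j) ^ (t ^ j) ≤ C0 ^ j * a n
  have chain : ∀ j n, a (n + j) ^ (t ^ j : ℝ) ≤ C0 ^ j * a n := by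
    intro j
    induction j with
    | zero => intro n; simp
    | succ j ih =>
      intro n
      have htj : (0:ℝ) ≤ (t ^ j : ℝ) := by positivity
      have htj1 : (t ^ j : ℝ) ≤ 1 := pow_le_one₀ (le_of_lt htpos) htle
      have e1 : a (n + (j+1)) ^ (t ^ (j+1) : ℝ) = (a (n + j + 1) ^ t) ^ (t ^ j : ℝ) := by
        rw [pow_succ', Real.rpow_mul (le_of_lt (hapos _))]
        rfl
      rw [e1]
      calc (a (n + j + 1) ^ t) ^ (t ^ j : ℝ)
          ≤ (C0 * a (n + j)) ^ (t ^ j : ℝ) :=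
            Real.rpow_le_rpow (Real.rpow_nonneg (le_of_lt (hapos _)) _) (step (n + j)) htj
        _ = C0 ^ (t ^ j : ℝ) * a (n + j) ^ (t ^ j : ℝ) :=
            Real.mul_rpow (le_of_lt hC0pos) (le_of_lt (hapos _))
        _ ≤ C0 * (C0 ^ j * a n) := by
            apply mul_le_mul
            · calc C0 ^ (t ^ j : ℝ) ≤ C0 ^ (1:ℝ) :=
                Real.rpow_le_rpow_of_exponent_le hC0 htj1
              _ = C0 := Real.rpow_one C0
            · exact ih n
            · exact Real.rpow_nonneg (le_of_lt (hapos _)) _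
            · exact le_of_lt hC0pos
        _ = C0 ^ (j+1) * a n := by ring
  -- choose J
  obtain ⟨J', hJ'⟩ : ∃ m : ℕ, t ^ m < 1/2 :=
    exists_pow_lt_of_lt_one (by norm_num) ht1
  set J : ℕ := J' + 1 with hJdef
  have hJ1 : 1 ≤ J := Nat.le_add_left 1 J'
  have hJhalf : t ^ J ≤ 1/2 := by
    calc t ^ J ≤ t ^ J' := pow_le_pow_of_le_one (le_of_lt htpos) htle (Nat.le_add_right _ _)
    _ ≤ 1/2 := le_of_lt hJ'
  set S : ℝ := ∑ j ∈ Finset.range J, (t ^ j : ℝ) with hS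
  have hSgeom : S = (t ^ J - 1) / (t - 1) := geom_sum_eq (ne_of_lt ht1) J
  have hSlb : (1 + δ) ≤ ε * S := by
    have h1t : 0 < 1 - t := by linarith
    have hS2 : S = (1 - t ^ J) / (1 - t) := by
      rw [hSgeom, ← neg_sub (1:ℝ) (t ^ J), ← neg_sub (1:ℝ) t, neg_div_neg_eq]
    have hge : (1/2) / (1 - t) ≤ S := by
      rw [hS2]
      exact (div_le_div_iff_of_pos_right h1t).mpr (by linarith)
    have h1t' : 1 - t = δ / (1 + δ) := by rw [ht]; field_simp; ring
    have key : ε * ((1/2) / (1 - t)) = 1 + δ := by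
      rw [h1t', hδ]
      have : (1:ℝ) + ε/2 ≠ 0 := by intro hc; rw [hδ] at h1δ; linarith
      field_simp
    calc (1:ℝ) + δ = ε * ((1/2) / (1 - t)) := key.symm
    _ ≤ ε * S := mul_le_mul_of_nonneg_left hge (le_of_lt hε)
  -- main estimate for n ≥ J
  set D : ℝ := C0 ^ (J * J) with hD
  have hDpos : 0 < D := pow_pos hC0pos _
  have hP1 : ∀ n, (1:ℝ) ≤ ∏ m ∈ Finset.range n, a m :=
    fun n => one_le_prod_real (fun m _ => ha m)
  have main : ∀ n, J ≤ n → a n ≤ (C0 * D ^ ε) * (∏ m ∈ Finset.range n, a m) ^ ε := by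
    intro n hJn
    have hn1 : 1 ≤ n := le_trans hJ1 hJn
    set x : ℝ := a (n - 1) with hx
    have hx1 : 1 ≤ x := ha _
    -- x ^ S ≤ D * P n
    have hxS : x ^ S ≤ D * ∏ m ∈ Finset.range n, a m := by
      have hterm : ∀ j ∈ Finset.range J, x ^ (t ^ j : ℝ) ≤ C0 ^ J * a (n - 1 - j) := by
        intro j hj
        have hjJ : j < J := Finset.mem_range.mp hj
        have harith : (n - 1 - j) + j = n - 1 := by omega
        have := chain j (n - 1 - j)
        rw [harith] at this
        refine le_trans this ?_
        have : C0 ^ j ≤ C0 ^ J := pow_le_pow_right₀ hC0 (le_of_lt hjJ)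
        exact mul_le_mul_of_nonneg_right this (le_of_lt (hapos _))
      have hprod1 : x ^ S ≤ ∏ j ∈ Finset.range J, (C0 ^ J * a (n - 1 - j)) := by
        rw [hS, rpow_finset_sum x (lt_of_lt_of_le one_pos hx1)]
        exact Finset.prod_le_prod (fun j _ => Real.rpow_nonneg (by linarith) _) hterm
      have hprod2 : ∏ j ∈ Finset.range J, (C0 ^ J * a (n - 1 - j))
          = D * ∏ j ∈ Finset.range J, a (n - 1 - j) := by
        rw [Finset.prod_mul_distrib, Finset.prod_const, Finset.card_range, hD, ← pow_mul]
      have hprod3 : ∏ j ∈ Finset.range J, a (n - 1 - j) ≤ ∏ m ∈ Finset.range n, a m := by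
        have hinj : Set.InjOn (fun j => n - 1 - j) (Finset.range J) := by
          intro u hu v hv huv
          simp only [Finset.coe_range, Set.mem_Iio] at hu hv
          have huv' : n - 1 - u = n - 1 - v := huv
          omega
        rw [← Finset.prod_image hinj]
        apply prod_le_prod_subset_real
        · intro m hm
          simp only [Finset.mem_image, Finset.mem_range] at hm ⊢
          obtain ⟨j, hj, rfl⟩ := hm
          omega
        · exact fun i _ => ha i
      calc x ^ S ≤ D * ∏ j ∈ Finset.range J, a (n - 1 - j) := by
            rw [← hprod2]; exact hprod1
      _ ≤ D * ∏ m ∈ Finset.range n, a m :=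
            mul_le_mul_of_nonneg_left hprod3 (le_of_lt hDpos)
    -- conclude
    have h5 : a n ≤ C0 * x ^ ((1:ℝ) + δ) := by
      have := hstep (n - 1)
      rwa [Nat.sub_add_cancel hn1] at this
    have h6 : x ^ ((1:ℝ) + δ) ≤ x ^ (S * ε) := by
      apply Real.rpow_le_rpow_of_exponent_le hx1
      calc (1:ℝ) + δ ≤ ε * S := hSlb
      _ = S * ε := mul_comm _ _
    have h7 : x ^ (S * ε) ≤ D ^ ε * (∏ m ∈ Finset.range n, a m) ^ ε := by
      rw [Real.rpow_mul (by linarith : (0:ℝ) ≤ x),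
        ← Real.mul_rpow (le_of_lt hDpos) (by linarith [hP1 n])]
      exact Real.rpow_le_rpow (Real.rpow_nonneg (by linarith) _) hxS (le_of_lt hε)
    calc a n ≤ C0 * x ^ ((1:ℝ) + δ) := h5
    _ ≤ C0 * (D ^ ε * (∏ m ∈ Finset.range n, a m) ^ ε) :=
        mul_le_mul_of_nonneg_left (le_trans h6 h7) (le_of_lt hC0pos)
    _ = (C0 * D ^ ε) * (∏ m ∈ Finset.range n, a m) ^ ε := by ring
  -- final constant
  refine ⟨C0 * D ^ ε + ∏ m ∈ Finset.range J, a m, ?_, ?_⟩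
  · have := hP1 J
    have : (0:ℝ) < C0 * D ^ ε := by positivity
    linarith [hP1 J]
  · intro n
    have hPε : (1:ℝ) ≤ (∏ m ∈ Finset.range n, a m) ^ ε :=
      Real.one_le_rpow (hP1 n) (le_of_lt hε)
    by_cases hn : J ≤ n
    · calc a n ≤ (C0 * D ^ ε) * (∏ m ∈ Finset.range n, a m) ^ ε := main n hn
      _ ≤ (C0 * D ^ ε + ∏ m ∈ Finset.range J, a m) * (∏ m ∈ Finset.range n, a m) ^ ε := by
          apply mul_le_mul_of_nonneg_right _ (by linarith)
          linarith [hP1 J]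
    · push_neg at hn
      have h1 : a n ≤ ∏ m ∈ Finset.range J, a m := by
        have he : a n = ∏ m ∈ {n}, a m := by simp
        rw [he]
        apply prod_le_prod_subset_real
        · simpa using Finset.mem_range.mpr hn
        · exact fun i _ => ha i
      have h2 : (0:ℝ) < C0 * D ^ ε := by positivity
      calc a n ≤ ∏ m ∈ Finset.range J, a m := h1
      _ ≤ (C0 * D ^ ε + ∏ m ∈ Finset.range J, a m) * 1 := by linarith
      _ ≤ (C0 * D ^ ε + ∏ m ∈ Finset.range J, a m) * (∏ m ∈ Finset.range n, a m) ^ ε := by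
          apply mul_le_mul_of_nonneg_left hPε
          linarith [hP1 J]


variable {O : Type*} [Ring O]

lemma phi_inj : Function.Injective (fun x : O × Polynomial O => C x.1 + X * x.2) := by
  rintro ⟨a, q⟩ ⟨b, r⟩ h
  simp only [Prod.mk.injEq]
  have h0 : a = b := by
    have := congrArg (fun p => Polynomial.coeff p 0) h
    simpa [mul_coeff_zero] using this
  have h1 : q = r := by
    ext i
    have := congrArg (fun p => Polynomial.coeff p (i + 1)) h
    simpa [coeff_X_mul, coeff_C] using this
  exact ⟨h0, h1⟩

/-- The filtration on the polynomial ring built from a filtration on `O`. -/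
def Gfil (F : ℕ → Set O) (n : ℕ) : Set (Polynomial O) :=
  {p | p.degree < (n : ℕ) ∧ ∀ i, p.coeff i ∈ F (n - (i + 1))}

lemma mem_Gfil {F : ℕ → Set O} {n : ℕ} {p : Polynomial O} :
    p ∈ Gfil F n ↔ p.degree < (n : ℕ) ∧ ∀ i, p.coeff i ∈ F (n - (i + 1)) := Iff.rfl

lemma Gfil_coeff_zero {F : ℕ → Set O} {n : ℕ} {p : Polynomial O}
    (hp : p ∈ Gfil F n) {i : ℕ} (hi : n ≤ i) : p.coeff i = 0 :=
  coeff_eq_zero_of_degree_lt (lt_of_lt_of_le hp.1 (by exact_mod_cast hi))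

lemma zero_mem_Gfil {F : ℕ → Set O} (h0 : ∀ m, (0 : O) ∈ F m) (n : ℕ) :
    (0 : Polynomial O) ∈ Gfil F n := by
  refine ⟨?_, fun i => by simpa using h0 _⟩
  rw [Polynomial.degree_zero]
  exact WithBot.bot_lt_coe (n : ℕ)

lemma Gfil_mono {F : ℕ → Set O} (hmono : ∀ {a b : ℕ}, a ≤ b → F a ⊆ F b)
    {m n : ℕ} (hmn : m ≤ n) : Gfil F m ⊆ Gfil F n := by
  intro p hp
  refine ⟨lt_of_lt_of_le hp.1 (by exact_mod_cast hmn), fun i => ?_⟩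
  exact hmono (Nat.sub_le_sub_right hmn _) (hp.2 i)

lemma Gfil_succ {F : ℕ → Set O} (h0 : ∀ m, (0 : O) ∈ F m) (n : ℕ) :
    Gfil F (n + 1) = (fun x : O × Polynomial O => C x.1 + X * x.2) '' (F n ×ˢ Gfil F n) := by
  ext p
  constructor
  · rintro ⟨hdeg, hcoeff⟩
    refine ⟨(p.coeff 0, p.divX), ⟨?_, ?_, ?_⟩, ?_⟩
    · simpa using hcoeff 0
    · rw [Polynomial.degree_lt_iff_coeff_zero]
      intro m hm
      rw [Polynomial.coeff_divX]
      exact coeff_eq_zero_of_degree_lt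
        (lt_of_lt_of_le hdeg (by exact_mod_cast Nat.succ_le_succ hm))
    · intro i
      rw [Polynomial.coeff_divX]
      simpa [Nat.succ_sub_succ] using hcoeff (i + 1)
    · simp only
      rw [add_comm]
      exact p.X_mul_divX_add
  · rintro ⟨⟨a, q⟩, ⟨ha, hqdeg, hqcoeff⟩, rfl⟩
    constructor
    · rw [Polynomial.degree_lt_iff_coeff_zero]
      intro m hm
      obtain ⟨i, rfl⟩ : ∃ i, m = i + 1 := ⟨m - 1, by omega⟩
      have hiq : q.coeff i = 0 :=
        coeff_eq_zero_of_degree_lt (lt_of_lt_of_le hqdeg (by exact_mod_cast (by omega : n ≤ i)))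
      simp [coeff_X_mul, coeff_C, hiq]
    · intro i
      cases i with
      | zero => simpa [mul_coeff_zero] using ha
      | succ i =>
        have := hqcoeff i
        simpa [coeff_X_mul, coeff_C, Nat.succ_sub_succ] using this

lemma X_mul_mem_Gfil {F : ℕ → Set O} (h0 : ∀ m, (0 : O) ∈ F m) {n : ℕ} {p : Polynomial O}
    (hp : p ∈ Gfil F n) : X * p ∈ Gfil F (n + 1) := by
  constructor
  · rw [Polynomial.degree_lt_iff_coeff_zero]
    intro m hm
    obtain ⟨i, rfl⟩ : ∃ i, m = i + 1 := ⟨m - 1, by omega⟩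
    rw [coeff_X_mul]
    exact Gfil_coeff_zero hp (by omega)
  · intro i
    cases i with
    | zero => simpa [mul_coeff_zero] using h0 _
    | succ i =>
      rw [coeff_X_mul]
      simpa [Nat.succ_sub_succ] using hp.2 i

lemma X_pow_mul_mem_Gfil {F : ℕ → Set O} (h0 : ∀ m, (0 : O) ∈ F m) (j : ℕ) {n : ℕ}
    {p : Polynomial O} (hp : p ∈ Gfil F n) : X ^ j * p ∈ Gfil F (n + j) := by
  induction j with
  | zero => simpa using hp
  | succ j ih =>
    have : (X : Polynomial O) ^ (j + 1) * p = X * (X ^ j * p) := by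
      rw [pow_succ', mul_assoc]
    rw [this]
    exact X_mul_mem_Gfil h0 ih

lemma C_mul_mem_Gfil {F : ℕ → Set O} (h0 : ∀ m, (0 : O) ∈ F m)
    (hmono : ∀ {a b : ℕ}, a ≤ b → F a ⊆ F b)
    {b : O} {kb : ℕ} (hb : ∀ m, ∀ x ∈ F m, b * x ∈ F (m + kb))
    {n : ℕ} {p : Polynomial O} (hp : p ∈ Gfil F n) : C b * p ∈ Gfil F (n + kb) := by
  constructor
  · rw [Polynomial.degree_lt_iff_coeff_zero]
    intro m hm
    rw [coeff_C_mul, Gfil_coeff_zero hp (by omega), mul_zero]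
  · intro i
    rw [coeff_C_mul]
    by_cases hi : i < n
    · exact hmono (by omega) (hb _ _ (hp.2 i))
    · rw [Gfil_coeff_zero hp (by omega), mul_zero]
      exact h0 _

lemma sum_mem_Gfil {F : ℕ → Set O} (h0 : ∀ m, (0 : O) ∈ F m)
    (hmono : ∀ {a b : ℕ}, a ≤ b → F a ⊆ F b)
    {k₁ : ℕ} (haddG : ∀ m, ∀ x ∈ Gfil F m, ∀ y ∈ Gfil F m, x + y ∈ Gfil F (m + k₁))
    (s : ℕ) (m : ℕ) (f : ℕ → Polynomial O) (hf : ∀ j < s, f j ∈ Gfil F m) :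
    (∑ j ∈ Finset.range s, f j) ∈ Gfil F (m + s * k₁) := by
  induction s with
  | zero => simpa using zero_mem_Gfil h0 m
  | succ s ih =>
    rw [Finset.sum_range_succ]
    have h1 : (∑ j ∈ Finset.range s, f j) ∈ Gfil F (m + s * k₁) :=
      ih (fun j hj => hf j (by omega))
    have h2 : f s ∈ Gfil F (m + s * k₁) :=
      Gfil_mono hmono (Nat.le_add_right _ _) (hf s (by omega))
    have := haddG _ _ h1 _ h2
    have harith : m + s * k₁ + k₁ = m + (s + 1) * k₁ := by ring
    rwa [harith] at this

end Aux

/-- if a ring `O` admits a constrained filtration, then so does the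
polynomial ring `O[X]`. -/
theorem statement9 (O : Type*) [Ring O] (h : ConstrainedlyFiltered O) :
    ConstrainedlyFiltered (Polynomial O) := by
  classical
  obtain ⟨F0, hFN, hFsucc, hFcover, ⟨k₁, hFadd⟩, hFsmul, hFgrow⟩ := h
  obtain ⟨N, hN⟩ := hFcover 0
  set F : ℕ → Set O := fun n => F0 (n + N) with hFdef
  have hF0mono : ∀ {a b : ℕ}, a ≤ b → F0 a ⊆ F0 b := fun {a b} hab =>
    monotone_nat_of_le_succ hFsucc hab
  have hmono : ∀ {a b : ℕ}, a ≤ b → F a ⊆ F b := fun {a b} hab => hF0mono (by omega)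
  have h0 : ∀ m, (0 : O) ∈ F m := fun m => hF0mono (Nat.le_add_left N m) hN
  have hfin : ∀ m, (F m).Finite := fun m => (hFN _).1
  have hne : ∀ m, (F m).Nonempty := fun m => (hFN _).2
  have haddF : ∀ m, ∀ x ∈ F m, ∀ y ∈ F m, x + y ∈ F (m + k₁) := by
    intro m x hx y hy
    have h1 := hFadd (m + N) x hx y hy
    have e : m + N + k₁ = m + k₁ + N := by omega
    rw [e] at h1
    exact h1
  have hsmulF : ∀ a : O, ∃ k, ∀ m, ∀ x ∈ F m, a * x ∈ F (m + k) := by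
    intro a
    obtain ⟨k, hk⟩ := hFsmul a
    refine ⟨k, fun m x hx => ?_⟩
    have h1 := hk (m + N) x hx
    have e : m + N + k = m + k + N := by omega
    rw [e] at h1
    exact h1
  have haddG : ∀ n, ∀ x ∈ Gfil F n, ∀ y ∈ Gfil F n, x + y ∈ Gfil F (n + k₁) := by
    intro n x hx y hy
    constructor
    · rw [Polynomial.degree_lt_iff_coeff_zero]
      intro m hm
      rw [Polynomial.coeff_add, Gfil_coeff_zero hx (by omega),
        Gfil_coeff_zero hy (by omega), add_zero]
    · intro i
      rw [Polynomial.coeff_add]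
      by_cases hi : i < n
      · exact hmono (by omega) (haddF _ _ (hx.2 i) _ (hy.2 i))
      · rw [Gfil_coeff_zero hx (by omega), Gfil_coeff_zero hy (by omega), add_zero]
        exact h0 _
  have hGcard : ∀ n, (Gfil F n).Finite ∧
      (Gfil F n).ncard = ∏ m ∈ Finset.range n, (F m).ncard := by
    intro n
    induction n with
    | zero =>
      have hG0 : Gfil F 0 = {0} := by
        ext p
        simp only [Set.mem_singleton_iff, mem_Gfil]
        constructor
        · rintro ⟨hdeg, -⟩
          rw [← Polynomial.degree_eq_bot]
          exact Nat.WithBot.lt_zero_iff.mp (by exact_mod_cast hdeg)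
        · rintro rfl
          exact zero_mem_Gfil h0 0
      rw [hG0]
      exact ⟨Set.finite_singleton 0, by simp⟩
    | succ n ih =>
      rw [Gfil_succ h0 n]
      refine ⟨((hfin n).prod ih.1).image _, ?_⟩
      rw [Set.ncard_image_of_injective _ phi_inj, ncard_sprod, ih.2,
        Finset.prod_range_succ, mul_comm]
  refine ⟨Gfil F, ?_, ?_, ?_, ?_, ?_, ?_⟩
  · exact fun n => ⟨(hGcard n).1, ⟨0, zero_mem_Gfil h0 n⟩⟩
  · exact fun n => Gfil_mono hmono (Nat.le_succ n)
  · intro p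
    choose c hc using fun i => hFcover (p.coeff i)
    refine ⟨((Finset.range (p.natDegree + 1)).sup fun i => c i + i + 1)
      + (p.natDegree + 1), ?_, ?_⟩
    · apply lt_of_le_of_lt p.degree_le_natDegree
      exact_mod_cast (by omega : p.natDegree <
        ((Finset.range (p.natDegree + 1)).sup fun i => c i + i + 1) + (p.natDegree + 1))
    · intro i
      by_cases hi : i ≤ p.natDegree
      · have hmem : i ∈ Finset.range (p.natDegree + 1) := Finset.mem_range.mpr (by omega)
        have h1 : c i + i + 1 ≤ (Finset.range (p.natDegree + 1)).sup fun i => c i + i + 1 :=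
          Finset.le_sup (f := fun i => c i + i + 1) hmem
        have h2 : p.coeff i ∈ F (c i) := hF0mono (Nat.le_add_right _ N) (hc i)
        refine hmono ?_ h2
        omega
      · rw [Polynomial.coeff_eq_zero_of_natDegree_lt (by omega)]
        exact h0 _
  · exact ⟨k₁, haddG⟩
  · intro a
    choose k2 hk2 using fun j => hsmulF (a.coeff j)
    set d := a.natDegree with hd
    set K := (Finset.range (d + 1)).sup k2 with hK
    refine ⟨d + K + (d + 1) * k₁, ?_⟩
    intro n p hp
    have hterm : ∀ j < d + 1, C (a.coeff j) * X ^ j * p ∈ Gfil F (n + (d + K)) := by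
      intro j hj
      rw [mul_assoc]
      have h1 : X ^ j * p ∈ Gfil F (n + j) := X_pow_mul_mem_Gfil h0 j hp
      have h2 := C_mul_mem_Gfil h0 hmono (hk2 j) h1
      have h3 : k2 j ≤ K := Finset.le_sup (Finset.mem_range.mpr hj)
      refine Gfil_mono hmono ?_ h2
      omega
    have hrw : a * p = ∑ j ∈ Finset.range (d + 1), C (a.coeff j) * X ^ j * p := by
      conv_lhs => rw [a.as_sum_range' (d + 1) (by omega)]
      rw [Finset.sum_mul]
      refine Finset.sum_congr rfl fun j _ => ?_
      rw [C_mul_X_pow_eq_monomial]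
    rw [hrw]
    have h4 := sum_mem_Gfil h0 hmono haddG (d + 1) (n + (d + K))
      (fun j => C (a.coeff j) * X ^ j * p) hterm
    have e : n + (d + K) + (d + 1) * k₁ = n + (d + K + (d + 1) * k₁) := by ring
    rw [e] at h4
    exact h4
  · intro ε hε
    obtain ⟨C, hCpos, hC⟩ := hFgrow (ε / 2) (by positivity)
    set C0 : ℝ := max C 1 with hC0
    set a : ℕ → ℝ := fun n => ((F n).ncard : ℝ) with ha_def
    have ha : ∀ n, 1 ≤ a n := fun n =>
      Nat.one_le_cast.mpr ((Set.ncard_pos (hfin n)).mpr (hne n))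
    have hstep : ∀ n, a (n + 1) ≤ C0 * a n ^ ((1 : ℝ) + ε / 2) := by
      intro n
      have e : F (n + 1) = F0 (n + N + 1) := by
        show F0 (n + 1 + N) = F0 (n + N + 1)
        have e2 : n + 1 + N = n + N + 1 := by omega
        rw [e2]
      have h1 : a (n + 1) = ((F0 (n + N + 1)).ncard : ℝ) := by rw [ha_def]; simp only; rw [e]
      have h2 := hC (n + N)
      have h3 : ((F0 (n + N)).ncard : ℝ) = a n := rfl
      rw [h1]
      calc ((F0 (n + N + 1)).ncard : ℝ) ≤ C * ((F0 (n + N)).ncard : ℝ) ^ ((1:ℝ) + ε/2) := h2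
      _ = C * a n ^ ((1:ℝ) + ε/2) := by rw [h3]
      _ ≤ C0 * a n ^ ((1:ℝ) + ε/2) := by
          apply mul_le_mul_of_nonneg_right (le_max_left C 1)
          exact Real.rpow_nonneg (by positivity) _
    obtain ⟨Cg, hCgpos, hCg⟩ := growth_aux ε hε a ha C0 (le_max_right C 1) hstep
    refine ⟨Cg, hCgpos, ?_⟩
    intro n
    have hPcast : ((Gfil F n).ncard : ℝ) = ∏ m ∈ Finset.range n, a m := by
      rw [(hGcard n).2]
      push_cast
      rfl
    have hP1 : (1 : ℝ) ≤ ∏ m ∈ Finset.range n, a m := one_le_prod_real fun m _ => ha m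
    have hcardsucc : ((Gfil F (n + 1)).ncard : ℝ) = a n * ∏ m ∈ Finset.range n, a m := by
      rw [(hGcard (n + 1)).2]
      push_cast [Finset.prod_range_succ]
      ring
    rw [hcardsucc, hPcast]
    have hPpos : (0 : ℝ) < ∏ m ∈ Finset.range n, a m := by linarith
    calc a n * ∏ m ∈ Finset.range n, a m
        ≤ (Cg * (∏ m ∈ Finset.range n, a m) ^ ε) * ∏ m ∈ Finset.range n, a m :=
          mul_le_mul_of_nonneg_right (hCg n) (by linarith)
    _ = Cg * ((∏ m ∈ Finset.range n, a m) ^ ε * (∏ m ∈ Finset.range n, a m) ^ (1:ℝ)) := by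
          rw [Real.rpow_one]; ring
    _ = Cg * (∏ m ∈ Finset.range n, a m) ^ ((1:ℝ) + ε) := by
          rw [← Real.rpow_add hPpos, add_comm]
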